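/- In the AdaSub algorithm, for each variable index j ∈ {1,...,p}, the variable is considered infinitely often in the model search: P(∑_{t=1}^∞ Z_j^{(t)} = ∞) = 1, where Z_j^{(t)} is the indicator that j is included in the sampled subset V^{(t)} at iteration t. -/

import Mathlib

open MeasureTheory Filter

lemma harmonic_like_div (q p K : ℝ) (hq : 0 < q) (hp : 0 < p) (hK : 0 < K) :
    Tendsto (fun n => ∑ k ∈ Finset.range n, q / (p + K * k)) atTop atTop := by
  set M := max p K with hM
  have hMpos : 0 < M := lt_max_of_lt_left hp
  have hbase : Tendsto (fun n => (q / M) * ∑ k ∈ Finset.range n, (1 / (k + 1) : ℝ))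
      atTop atTop :=
    (Real.tendsto_sum_range_one_div_nat_succ_atTop).const_mul_atTop (div_pos hq hMpos)
  refine tendsto_atTop_mono (fun n => ?_) hbase
  rw [Finset.mul_sum]
  refine Finset.sum_le_sum fun k _ => ?_
  have hden : p + K * k ≤ M * (k + 1) := by
    have h1 : p ≤ M := le_max_left _ _
    have h2 : K * k ≤ M * k := mul_le_mul_of_nonneg_right (le_max_right _ _) (Nat.cast_nonneg k)
    nlinarith
  have hdenpos : 0 < p + K * k := by positivity
  rw [div_mul_div_comm, mul_one]
  exact div_le_div₀ hq.le le_rfl hdenpos hden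

/-- In AdaSub, for a fixed variable index `j`, the variable is considered
infinitely often: almost surely `∑_{t=1}^∞ Z_j^{(t)} = ∞`. Here `Z t` is the {0,1}-valued
indicator that `j ∈ V^{(t)}`, `W t` the indicator that `j ∈ f_C(V^{(t)})`, and the
conditional inclusion probability is `r^{(t)} = (q + K ∑_{i≤t} W_i)/(p + K ∑_{i≤t} Z_i)`. -/
theorem adaSub_considered_infinitely_often {Ω : Type*} {m0 : MeasurableSpace Ω}
    (μ : Measure Ω) [IsProbabilityMeasure μ] (ℱ : Filtration ℕ m0)
    (q p K : ℝ) (hq : 0 < q) (hqp : q < p) (hK : 0 < K)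
    (Z W : ℕ → Ω → ℝ)
    (hZ01 : ∀ t ω, Z t ω = 0 ∨ Z t ω = 1)
    (hW01 : ∀ t ω, W t ω = 0 ∨ W t ω = 1)
    (hWZ : ∀ t ω, W t ω ≤ Z t ω)
    (hZadapt : ∀ t, Measurable[ℱ t] (Z t))
    (hWadapt : ∀ t, Measurable[ℱ t] (W t))
    (hcond : ∀ t : ℕ, (μ[Z (t + 1) | ℱ t]) =ᵐ[μ] fun ω =>
      (q + K * ∑ i ∈ Finset.Icc 1 t, W i ω) / (p + K * ∑ i ∈ Finset.Icc 1 t, Z i ω)) :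
    ∀ᵐ ω ∂μ, Tendsto (fun n => ∑ t ∈ Finset.Icc 1 n, Z t ω) atTop atTop := by
  have hp : 0 < p := hq.trans hqp
  set s : ℕ → Set Ω := fun t => Z t ⁻¹' {1} with hs_def
  have hs : ∀ n, MeasurableSet[ℱ n] (s n) := fun n =>
    (hZadapt n) (measurableSet_singleton 1)
  have hind : ∀ t, (s t).indicator (1 : Ω → ℝ) = Z t := by
    intro t
    funext ω
    rcases hZ01 t ω with h | h <;>
      simp [hs_def, Set.indicator_apply, Set.mem_preimage, h]
  have hcond' : ∀ k : ℕ, (μ[(s (k + 1)).indicator (1 : Ω → ℝ) | ℱ k]) =ᵐ[μ] fun ω =>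
      (q + K * ∑ i ∈ Finset.Icc 1 k, W i ω) / (p + K * ∑ i ∈ Finset.Icc 1 k, Z i ω) := by
    intro k
    rw [hind]
    exact hcond k
  have hBC := MeasureTheory.tendsto_sum_indicator_atTop_iff' (μ := μ) (ℱ := ℱ) hs
  filter_upwards [hBC, ae_all_iff.2 hcond'] with ω hω hcondω
  have hsum : ∀ n, ∑ t ∈ Finset.Icc 1 n, Z t ω = ∑ k ∈ Finset.range n,
      (s (k + 1)).indicator (1 : Ω → ℝ) ω := by
    intro n
    rw [show Finset.Icc 1 n = Finset.Ico 1 (n+1) by rfl, Finset.sum_Ico_eq_sum_range]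
    simp [hind, add_comm]
  simp only [hsum]
  rw [hω]
  -- show the conditional expectation sum diverges, by comparison with q/(p+Kk)
  refine tendsto_atTop_mono (fun n => ?_) (harmonic_like_div q p K hq hp hK)
  refine Finset.sum_le_sum fun k _ => ?_
  rw [hcondω k]
  have hWnn : 0 ≤ ∑ i ∈ Finset.Icc 1 k, W i ω :=
    Finset.sum_nonneg fun i _ => by rcases hW01 i ω with h | h <;> simp [h]
  have hZnn : 0 ≤ ∑ i ∈ Finset.Icc 1 k, Z i ω :=
    Finset.sum_nonneg fun i _ => by rcases hZ01 i ω with h | h <;> simp [h]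
  have hZle : ∑ i ∈ Finset.Icc 1 k, Z i ω ≤ k := by
    calc ∑ i ∈ Finset.Icc 1 k, Z i ω ≤ ∑ i ∈ Finset.Icc 1 k, (1 : ℝ) :=
          Finset.sum_le_sum fun i _ => by rcases hZ01 i ω with h | h <;> simp [h]
      _ = k := by simp
  have hdenpos : 0 < p + K * ∑ i ∈ Finset.Icc 1 k, Z i ω := by positivity
  refine div_le_div₀ (by positivity) (by nlinarith) hdenpos (by nlinarith)
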